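/- Let Q : Matrix (Fin d) (Fin d) ℝ be a symmetric invertible matrix and let b : Basis (Fin d) ℝ (EuclideanSpace ℝ (Fin d)) be a basis. Suppose that for every integer vector z : Fin d → ℤ the quadratic form value (∑ᵢ zᵢ • b i)ᵀ · Q · (∑ᵢ zᵢ • b i) is nonnegative. Then Q is positive definite. -/

import Mathlib

open Matrix

/-- If a symmetric invertible matrix `Q` has nonnegative associated quadratic
form on every point of the full-rank lattice generated by a basis `b` of
`ℝ^d`, then `Q` is positive definite. -/
theorem posDef_of_nonneg_on_lattice
    {d : ℕ} (Q : Matrix (Fin d) (Fin d) ℝ)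
    (hQsym : Qᵀ = Q) (hQunit : IsUnit Q)
    (b : Module.Basis (Fin d) ℝ (EuclideanSpace ℝ (Fin d)))
    (hnonneg : ∀ z : Fin d → ℤ,
      0 ≤ (fun i => (∑ j, (z j : ℝ) • b j) i) ⬝ᵥ
        Q.mulVec (fun i => (∑ j, (z j : ℝ) • b j) i)) :
    Q.PosDef := by
  -- the quadratic form in coordinates
  set f : (Fin d → ℝ) → ℝ := fun c =>
    (fun i => (∑ j, c j • b j) i) ⬝ᵥ Q.mulVec (fun i => (∑ j, c j • b j) i) with hf
  have hsum : ∀ (c : Fin d → ℝ) (i : Fin d), (∑ j, c j • b j) i = ∑ j, c j * b j i := by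
    intro c i
    simp [EuclideanSpace, PiLp, WithLp]
  -- homogeneity of f
  have hhom : ∀ (t : ℝ) (c : Fin d → ℝ), f (t • c) = t * t * f c := by
    intro t c
    have hx : (fun i => (∑ j, (t • c) j • b j) i)
        = t • (fun i => (∑ j, c j • b j) i) := by
      funext i
      simp only [Pi.smul_apply, smul_eq_mul, hsum, Finset.mul_sum, mul_assoc]
    simp only [hf, hx, smul_dotProduct, mulVec_smul, dotProduct_smul, smul_eq_mul]
    ring
  -- f is nonnegative on rational points
  have hrat : ∀ q : Fin d → ℚ, 0 ≤ f (fun j => (q j : ℝ)) := by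
    intro q
    set n : ℕ := ∏ j, (q j).den with hn
    have hnpos : 0 < n := Finset.prod_pos fun j _ => (q j).pos
    have hz : ∀ j, ∃ z : ℤ, ((n : ℚ) * q j) = (z : ℚ) := by
      intro j
      have hdvd : ((q j).den : ℤ) ∣ (n : ℤ) := by
        exact_mod_cast Finset.dvd_prod_of_mem (fun j => (q j).den) (Finset.mem_univ j)
      obtain ⟨m, hm⟩ := hdvd
      refine ⟨(q j).num * m, ?_⟩
      have hden : ((q j).den : ℚ) ≠ 0 := by
        exact_mod_cast (q j).den_nz
      have hnq : (n : ℚ) = ((q j).den : ℚ) * (m : ℚ) := by exact_mod_cast hm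
      rw [hnq]
      push_cast
      rw [mul_assoc, mul_comm ((m : ℚ)) (q j), ← mul_assoc, Rat.den_mul_eq_num]
    choose z hzq using hz
    have key : (n : ℝ) • (fun j => (q j : ℝ)) = fun j => ((z j : ℝ)) := by
      funext j
      have := hzq j
      have : ((n : ℝ) * (q j : ℝ)) = (z j : ℝ) := by exact_mod_cast this
      simpa [Pi.smul_apply, smul_eq_mul] using this
    have h1 : 0 ≤ f (fun j => ((z j : ℝ))) := hnonneg z
    have h2 : f ((n : ℝ) • fun j => (q j : ℝ)) = (n : ℝ) * (n : ℝ) * f (fun j => (q j : ℝ)) :=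
      hhom _ _
    rw [key] at h2
    have hn2 : 0 < (n : ℝ) * (n : ℝ) := by positivity
    nlinarith [h1, h2]
  -- f is continuous
  have hcont : Continuous f := by
    have hg : ∀ i : Fin d, Continuous fun c : Fin d → ℝ => (∑ j, c j • b j) i := by
      intro i
      have : (fun c : Fin d → ℝ => (∑ j, c j • b j) i)
          = fun c => ∑ j, c j * (b j) i := by
        funext c
        rw [hsum]
      rw [this]
      exact continuous_finset_sum _ fun j _ =>
        ((continuous_apply j).mul continuous_const)
    have : f = fun c => ∑ i, ((∑ j, c j • b j) i) * (∑ k, Q i k * (∑ j, c j • b j) k) := by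
      funext c
      simp [hf, dotProduct, mulVec]
    rw [this]
    exact continuous_finset_sum _ fun i _ =>
      (hg i).mul (continuous_finset_sum _ fun k _ => continuous_const.mul (hg k))
  -- f is nonnegative everywhere by density of rationals
  have hall : ∀ c : Fin d → ℝ, 0 ≤ f c := by
    have hclosed : IsClosed {c : Fin d → ℝ | 0 ≤ f c} :=
      isClosed_le continuous_const hcont
    have hdense : Dense {c : Fin d → ℝ | 0 ≤ f c} := by
      have hd : Dense (Set.univ.pi fun _ : Fin d => Set.range ((↑) : ℚ → ℝ)) :=
        dense_pi Set.univ fun _ _ => Rat.denseRange_cast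
      refine Dense.mono ?_ hd
      intro c hc
      choose q hq using fun j => hc j (Set.mem_univ j)
      have : c = fun j => (q j : ℝ) := by funext j; exact (hq j).symm
      rw [this]
      exact hrat q
    intro c
    have := hclosed.closure_eq ▸ hdense.closure_eq
    have : c ∈ closure {c : Fin d → ℝ | 0 ≤ f c} := by rw [hdense.closure_eq]; trivial
    rwa [hclosed.closure_eq] at this
  -- Q is positive semidefinite
  have hpsd : Q.PosSemidef := by
    refine posSemidef_iff_dotProduct_mulVec.mpr ⟨by rwa [Matrix.IsHermitian, conjTranspose_eq_transpose_of_trivial], ?_⟩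
    intro x
    have hsurj : ∃ c : Fin d → ℝ, (fun i => (∑ j, c j • b j) i) = x := by
      refine ⟨fun j => b.repr (WithLp.toLp 2 x) j, ?_⟩
      funext i
      have : (∑ j, b.repr (WithLp.toLp 2 x) j • b j) = (WithLp.toLp 2 x : EuclideanSpace ℝ (Fin d)) := b.sum_repr (WithLp.toLp 2 x)
      rw [this]
    obtain ⟨c, hc⟩ := hsurj
    have := hall c
    rw [hf] at this
    simpa [hc, star_trivial] using this
  -- conclude positive definiteness using invertibility
  refine posDef_iff_dotProduct_mulVec.mpr ⟨hpsd.1, fun x hx => ?_⟩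
  rcases lt_or_eq_of_le ((posSemidef_iff_dotProduct_mulVec.mp hpsd).2 x) with h | h
  · simpa using h
  · exfalso
    have h0 : Q *ᵥ x = 0 := (hpsd.dotProduct_mulVec_zero_iff x).mp h.symm
    have : x = 0 := by
      have := congrArg (fun v => Q⁻¹ *ᵥ v) h0
      simpa [Matrix.mulVec_mulVec, Matrix.nonsing_inv_mul Q
        ((Matrix.isUnit_iff_isUnit_det Q).mp hQunit), Matrix.mulVec_zero] using this
    exact hx this
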